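/- Let z ≥ 0 and let φ, p be real numbers with φ + 6z ≤ 0. If 3(1 − 54z²)(1 − 54z² − 9zφ) p − 27zφ³ − 9(1 + 108z²)φ² + 10(1 − 54z²)² ≥ 0, then 3(1 − 54z²) p + 3φ² + 54zφ + 14(1 − 54z²) ≥ 0. -/
import Mathlib

/-- If `z ≥ 0`, `φ + 6z ≤ 0`, and the `I₃`-bracket `P₃ ≥ 0`, then the `I₂`-bracket
`P₂ ≥ 0`. -/
theorem P3_nonneg_implies_P2_nonneg (z φ p : ℝ) (hz : 0 ≤ z) (hφ : φ + 6 * z ≤ 0)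
    (hP3 : 3 * (1 - 54 * z ^ 2) * (1 - 54 * z ^ 2 - 9 * z * φ) * p
        - 27 * z * φ ^ 3 - 9 * (1 + 108 * z ^ 2) * φ ^ 2 + 10 * (1 - 54 * z ^ 2) ^ 2 ≥ 0) :
    3 * (1 - 54 * z ^ 2) * p + 3 * φ ^ 2 + 54 * z * φ + 14 * (1 - 54 * z ^ 2) ≥ 0 := by
  have hq : (1 : ℝ) ≤ 1 - 54 * z ^ 2 - 9 * z * φ := by nlinarith [mul_nonneg hz hz]
  nlinarith [sq_nonneg φ, sq_nonneg (1 - 54 * z ^ 2 - 9 * z * φ), hP3, hq,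
    mul_le_mul_of_nonneg_right hq (le_of_lt (by positivity : (0:ℝ) < 1))]
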